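/- arXiv:2501.11791 — 2 statements merged into one kernel-verified Lean document; each statement's English description precedes it below -/
import Mathlib

section
/- Fix d ≤ r and λ > 0, and define the EgReg estimator β̂^E(ω) = V_d D_d^{-1} Φ_d (Φ_d + λ I_d)^{-1} U_d' Y(ω). Then the conditional reducible prediction risk satisfies 𝔼[ tr( (β̂^E − V_d V_d' β*)' Σ_x (β̂^E − V_d V_d' β*) ) ] = tr(Σ_ε)·tr(V_d D_d^{-2} Φ_d² (Φ_d + λ I_d)^{-2} V_d' Σ_x) + λ²·vec(β*)'(I_q ⊗ V_d (Φ_d + λ I_d)^{-1} V_d' Σ_x V_d (Φ_d + λ I_d)^{-1} V_d') vec(β*). -/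
open Matrix
open scoped Kronecker

/-- The vectorization `vec(β)` of a `p × q` matrix, indexed to match `I_q ⊗ A`
(the index `(k, i)` with `k ∈ Fin q`, `i ∈ Fin p` corresponds to entry `β i k`). -/
def vecM {p q : ℕ} (β : Matrix (Fin p) (Fin q) ℝ) : Fin q × Fin p → ℝ :=
  fun ki => β ki.2 ki.1

/-- EgReg reducible prediction risk
`R_E(d, λ) = tr(Σ_ε)·tr(V_d D_d⁻² Φ_d² (Φ_d + λ I_d)⁻² V_d' Σ_x)
  + λ²·vec(β*)'(I_q ⊗ V_d (Φ_d + λ I_d)⁻¹ V_d' Σ_x V_d (Φ_d + λ I_d)⁻¹ V_d') vec(β*)`. -/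
noncomputable def RE {p q d : ℕ}
    (Vd : Matrix (Fin p) (Fin d) ℝ) (Dd Φd : Matrix (Fin d) (Fin d) ℝ)
    (Sx : Matrix (Fin p) (Fin p) ℝ) (Se : Matrix (Fin q) (Fin q) ℝ)
    (β : Matrix (Fin p) (Fin q) ℝ) (lam : ℝ) : ℝ :=
  Se.trace * (Vd * (Dd ^ 2)⁻¹ * Φd ^ 2 * ((Φd + lam • 1) ^ 2)⁻¹ * Vdᵀ * Sx).trace
  + lam ^ 2 * vecM β ⬝ᵥ (((1 : Matrix (Fin q) (Fin q) ℝ) ⊗ₖ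
      (Vd * (Φd + lam • 1)⁻¹ * Vdᵀ * Sx * Vd * (Φd + lam • 1)⁻¹ * Vdᵀ)).mulVec (vecM β))

/-- NIECE reducible prediction risk
`R_N(u, d) = tr(Σ_ε)·tr(V_u D_u⁻² V_u' Σ_x)
  + vec(β*)'(I_q ⊗ (V_u V_u' − V_d V_d') Σ_x (V_u V_u' − V_d V_d')) vec(β*)`. -/
noncomputable def RN {p q u d : ℕ}
    (Vu : Matrix (Fin p) (Fin u) ℝ) (Du : Matrix (Fin u) (Fin u) ℝ)
    (Vd : Matrix (Fin p) (Fin d) ℝ)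
    (Sx : Matrix (Fin p) (Fin p) ℝ) (Se : Matrix (Fin q) (Fin q) ℝ)
    (β : Matrix (Fin p) (Fin q) ℝ) : ℝ :=
  Se.trace * (Vu * (Du ^ 2)⁻¹ * Vuᵀ * Sx).trace
  + vecM β ⬝ᵥ (((1 : Matrix (Fin q) (Fin q) ℝ) ⊗ₖ
      ((Vu * Vuᵀ - Vd * Vdᵀ) * Sx * (Vu * Vuᵀ - Vd * Vdᵀ))).mulVec (vecM β))

/-- The largest eigenvalue of a square matrix. -/
noncomputable def maxEig {m : ℕ} (A : Matrix (Fin m) (Fin m) ℝ) : ℝ :=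
  sSup {t : ℝ | ∃ w : Fin m → ℝ, w ≠ 0 ∧ A.mulVec w = t • w}

open MeasureTheory

lemma vec_quad {p q : ℕ} (β : Matrix (Fin p) (Fin q) ℝ) (K : Matrix (Fin p) (Fin p) ℝ) :
    vecM β ⬝ᵥ (((1 : Matrix (Fin q) (Fin q) ℝ) ⊗ₖ K).mulVec (vecM β)) = (βᵀ * K * β).trace := by
  simp only [dotProduct, Matrix.mulVec, Matrix.trace, Matrix.diag, Matrix.mul_apply,
    kroneckerMap_apply, vecM, Fintype.sum_prod_type, Matrix.one_apply, transpose_apply,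
    dotProduct]
  simp only [ite_mul, one_mul, zero_mul, Finset.sum_ite_eq, Finset.mem_univ, if_true]
  refine Finset.sum_congr rfl fun k _ => ?_
  have h : ∀ i : Fin p, (∑ l : Fin q, ∑ j : Fin p, if k = l then K i j * β j l else 0)
      = ∑ j : Fin p, K i j * β j k := by
    intro i
    rw [Finset.sum_comm]
    simp [Finset.sum_ite_eq]
  simp only [h, Finset.mul_sum, Finset.sum_mul]
  rw [Finset.sum_comm]
  exact Finset.sum_congr rfl fun i _ => Finset.sum_congr rfl fun j _ => by ring

lemma integrable_mul2 {Ω : Type*} [MeasurableSpace Ω] {P : Measure Ω} {f g : Ω → ℝ}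
    (hf : MemLp f 2 P) (hg : MemLp g 2 P) : Integrable (fun ω => f ω * g ω) P := by
  have h := hg.smul (φ := f) hf (p := 2) (q := 2) (r := 1) (hpqr := ⟨by
    rw [ENNReal.inv_two_add_inv_two, inv_one]⟩)
  exact memLp_one_iff_integrable.mp h

lemma int_lin {Ω : Type*} [MeasurableSpace Ω] (P : Measure Ω) [IsFiniteMeasure P] {n q : ℕ}
    (E : Ω → Matrix (Fin n) (Fin q) ℝ) (hL2 : ∀ i k, MemLp (fun ω => E ω i k) 2 P)
    (hmean : ∀ i k, ∫ ω, E ω i k ∂P = 0) (N : Matrix (Fin q) (Fin n) ℝ) :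
    Integrable (fun ω => (N * E ω).trace) P ∧ (∫ ω, (N * E ω).trace ∂P) = 0 := by
  have hfun : (fun ω => (N * E ω).trace) = fun ω => ∑ k : Fin q, ∑ i : Fin n, N k i * E ω i k := by
    funext ω; simp [Matrix.trace, Matrix.mul_apply, Matrix.diag]
  have hInt : ∀ (k : Fin q) (i : Fin n), Integrable (fun ω => N k i * E ω i k) P :=
    fun k i => ((hL2 i k).integrable one_le_two).const_mul _
  have hIntS : Integrable (fun ω => ∑ k : Fin q, ∑ i : Fin n, N k i * E ω i k) P :=
    integrable_finset_sum _ fun k _ => integrable_finset_sum _ fun i _ => hInt k i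
  refine ⟨hfun ▸ hIntS, ?_⟩
  rw [hfun, integral_finset_sum _ fun k _ => integrable_finset_sum _ fun i _ => hInt k i]
  refine Finset.sum_eq_zero fun k _ => ?_
  rw [integral_finset_sum _ fun i _ => hInt k i]
  refine Finset.sum_eq_zero fun i _ => ?_
  rw [integral_const_mul, hmean, mul_zero]

lemma int_quad {Ω : Type*} [MeasurableSpace Ω] (P : Measure Ω) [IsFiniteMeasure P] {n q : ℕ}
    (E : Ω → Matrix (Fin n) (Fin q) ℝ) (Se : Matrix (Fin q) (Fin q) ℝ)
    (hL2 : ∀ i k, MemLp (fun ω => E ω i k) 2 P)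
    (hcov : ∀ i j k l, ∫ ω, E ω i k * E ω j l ∂P = (if i = j then (1:ℝ) else 0) * Se k l)
    (C : Matrix (Fin n) (Fin n) ℝ) :
    Integrable (fun ω => ((E ω)ᵀ * C * E ω).trace) P ∧
      (∫ ω, ((E ω)ᵀ * C * E ω).trace ∂P) = C.trace * Se.trace := by
  have hfun : (fun ω => ((E ω)ᵀ * C * E ω).trace)
      = fun ω => ∑ k : Fin q, ∑ j : Fin n, ∑ i : Fin n, C i j * (E ω i k * E ω j k) := by
    funext ω
    simp only [Matrix.trace, Matrix.diag, Matrix.mul_apply, transpose_apply, Finset.sum_mul]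
    exact Finset.sum_congr rfl fun k _ => Finset.sum_congr rfl fun j _ =>
      Finset.sum_congr rfl fun i _ => by ring
  have hInt : ∀ (k : Fin q) (j i : Fin n),
      Integrable (fun ω => C i j * (E ω i k * E ω j k)) P :=
    fun k j i => (integrable_mul2 (hL2 i k) (hL2 j k)).const_mul _
  have hIntS : Integrable
      (fun ω => ∑ k : Fin q, ∑ j : Fin n, ∑ i : Fin n, C i j * (E ω i k * E ω j k)) P :=
    integrable_finset_sum _ fun k _ => integrable_finset_sum _ fun j _ =>
      integrable_finset_sum _ fun i _ => hInt k j i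
  refine ⟨hfun ▸ hIntS, ?_⟩
  rw [hfun, integral_finset_sum _ fun k _ => integrable_finset_sum _ fun j _ =>
      integrable_finset_sum _ fun i _ => hInt k j i]
  have h4 : ∀ k : Fin q, (∫ ω, ∑ j : Fin n, ∑ i : Fin n, C i j * (E ω i k * E ω j k) ∂P)
      = C.trace * Se k k := by
    intro k
    rw [integral_finset_sum _ fun j _ => integrable_finset_sum _ fun i _ => hInt k j i]
    have h2 : ∀ j : Fin n, (∫ ω, ∑ i : Fin n, C i j * (E ω i k * E ω j k) ∂P)
        = C j j * Se k k := by
      intro j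
      rw [integral_finset_sum _ fun i _ => hInt k j i]
      have h3 : ∀ i : Fin n, (∫ ω, C i j * (E ω i k * E ω j k) ∂P)
          = if i = j then C j j * Se k k else 0 := by
        intro i
        rw [integral_const_mul, hcov]
        by_cases h : i = j <;> simp [h]
      simp only [h3, Finset.sum_ite_eq', Finset.mem_univ, if_true]
    simp only [h2, Matrix.trace, Matrix.diag, Finset.sum_mul]
  simp only [h4, Matrix.trace, Matrix.diag, Finset.mul_sum]

theorem egreg_conditional_reducible_risk
    (n p q r : ℕ)
    (X : Matrix (Fin n) (Fin p) ℝ)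
    (U : Matrix (Fin n) (Fin r) ℝ) (V : Matrix (Fin p) (Fin r) ℝ) (σ : Fin r → ℝ)
    (hrank : X.rank = r)
    (hSVD : X = U * Matrix.diagonal σ * Vᵀ)
    (hU : Uᵀ * U = 1) (hV : Vᵀ * V = 1)
    (hσpos : ∀ j, 0 < σ j) (hσanti : Antitone σ)
    (π : Equiv.Perm (Fin r)) (φ : Fin r → ℝ)
    (hφpos : ∀ j, 0 < φ j) (hφanti : Antitone φ)
    (Sx : Matrix (Fin p) (Fin p) ℝ) (hSx : Sx.PosSemidef)
    (Se : Matrix (Fin q) (Fin q) ℝ) (hSe : Se.PosSemidef)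
    (β : Matrix (Fin p) (Fin q) ℝ)
    (d : ℕ) (hdr : d ≤ r) (lam : ℝ) (hlam : 0 < lam)
    -- probability space and mean-zero noise with Var(vec E) = Σ_ε ⊗ I_n
    {Ω : Type*} [MeasurableSpace Ω] (P : Measure Ω) [IsProbabilityMeasure P]
    (E : Ω → Matrix (Fin n) (Fin q) ℝ)
    (hL2 : ∀ i k, MemLp (fun ω => E ω i k) 2 P)
    (hmean : ∀ i k, ∫ ω, E ω i k ∂P = 0)
    (hcov : ∀ i j k l, ∫ ω, E ω i k * E ω j l ∂P = (if i = j then (1:ℝ) else 0) * Se k l)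
    -- the response and the EgReg estimator
    (Y : Ω → Matrix (Fin n) (Fin q) ℝ) (hY : ∀ ω, Y ω = X * β + E ω)
    (Vd : Matrix (Fin p) (Fin d) ℝ) (hVd : Vd = V.submatrix id (fun j => π (Fin.castLE hdr j)))
    (Ud : Matrix (Fin n) (Fin d) ℝ) (hUd : Ud = U.submatrix id (fun j => π (Fin.castLE hdr j)))
    (Dd : Matrix (Fin d) (Fin d) ℝ) (hDd : Dd = Matrix.diagonal (fun j => σ (π (Fin.castLE hdr j))))
    (Φd : Matrix (Fin d) (Fin d) ℝ) (hΦd : Φd = Matrix.diagonal (fun j => φ (Fin.castLE hdr j)))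
    (βE : Ω → Matrix (Fin p) (Fin q) ℝ)
    (hβE : ∀ ω, βE ω = Vd * Dd⁻¹ * Φd * (Φd + lam • 1)⁻¹ * Udᵀ * Y ω) :
    ∫ ω, ((βE ω - Vd * Vdᵀ * β)ᵀ * Sx * (βE ω - Vd * Vdᵀ * β)).trace ∂P =
      RE Vd Dd Φd Sx Se β lam := by
  classical
  set f : Fin d → Fin r := fun j => π (Fin.castLE hdr j) with hf
  have hfinj : Function.Injective f := fun a b h =>
    Fin.castLE_injective hdr (π.injective h)
  set g : Fin d → ℝ := fun j => φ (Fin.castLE hdr j) with hgdef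
  set s : Fin d → ℝ := fun j => σ (f j) with hsdef
  have hs0 : ∀ j, s j ≠ 0 := fun j => ne_of_gt (hσpos _)
  have hgl0 : ∀ j, g j + lam ≠ 0 := fun j => ne_of_gt (add_pos (hφpos _) hlam)
  -- diagonal identities
  have hΦl : Φd + lam • 1 = Matrix.diagonal (fun j => g j + lam) := by
    rw [hΦd]
    ext i j
    by_cases h : i = j <;>
      simp [Matrix.diagonal_apply, Matrix.one_apply, h]
  have hDinv : Dd⁻¹ = Matrix.diagonal (fun j => (s j)⁻¹) :=
    Matrix.inv_eq_right_inv (by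
      rw [hDd, Matrix.diagonal_mul_diagonal, ← Matrix.diagonal_one]
      exact congrArg Matrix.diagonal (funext fun j => mul_inv_cancel₀ (hs0 j)))
  have hΦlinv : (Φd + lam • 1)⁻¹ = Matrix.diagonal (fun j => (g j + lam)⁻¹) :=
    Matrix.inv_eq_right_inv (by
      rw [hΦl, Matrix.diagonal_mul_diagonal, ← Matrix.diagonal_one]
      exact congrArg Matrix.diagonal (funext fun j => mul_inv_cancel₀ (hgl0 j)))
  have hD2inv : (Dd ^ 2)⁻¹ = Matrix.diagonal (fun j => (s j ^ 2)⁻¹) :=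
    Matrix.inv_eq_right_inv (by
      rw [hDd, Matrix.diagonal_pow, Matrix.diagonal_mul_diagonal, ← Matrix.diagonal_one]
      exact congrArg Matrix.diagonal (funext fun j => mul_inv_cancel₀ (pow_ne_zero 2 (hs0 j))))
  have hΦl2inv : ((Φd + lam • 1) ^ 2)⁻¹ = Matrix.diagonal (fun j => ((g j + lam) ^ 2)⁻¹) :=
    Matrix.inv_eq_right_inv (by
      rw [hΦl, Matrix.diagonal_pow, Matrix.diagonal_mul_diagonal, ← Matrix.diagonal_one]
      exact congrArg Matrix.diagonal (funext fun j => mul_inv_cancel₀ (pow_ne_zero 2 (hgl0 j))))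
  -- orthogonality
  have hUdU : Udᵀ * Ud = 1 := by
    rw [hUd]
    ext j k
    have h2 : (Uᵀ * U) (f j) (f k) = (1 : Matrix (Fin r) (Fin r) ℝ) (f j) (f k) := by rw [hU]
    simpa [Matrix.mul_apply, Matrix.one_apply, hfinj.eq_iff] using h2
  have hUdX : Udᵀ * X = Dd * Vdᵀ := by
    have h1 : Udᵀ * U = (1 : Matrix (Fin r) (Fin r) ℝ).submatrix f id := by
      rw [hUd]
      ext j t
      have h2 : (Uᵀ * U) (f j) t = (1 : Matrix (Fin r) (Fin r) ℝ) (f j) t := by rw [hU]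
      convert h2 using 1 <;> simp [Matrix.mul_apply] <;> rfl
    rw [hSVD, ← Matrix.mul_assoc, ← Matrix.mul_assoc, h1]
    ext j a
    simp [Matrix.mul_apply, Matrix.one_apply, Matrix.diagonal_apply, hDd, hVd, ite_mul,
      mul_ite, zero_mul, mul_zero, Finset.sum_ite_eq, hsdef]
  -- the deterministic and stochastic parts
  set m : Fin d → ℝ := fun j => (s j)⁻¹ * (g j * (g j + lam)⁻¹) with hmdef
  set a : Fin d → ℝ := fun j => -(lam * (g j + lam)⁻¹) with hadef
  have hM : Vd * Dd⁻¹ * Φd * (Φd + lam • 1)⁻¹ = Vd * Matrix.diagonal m := by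
    rw [hDinv, hΦlinv, hΦd, Matrix.mul_assoc, Matrix.diagonal_mul_diagonal,
      Matrix.mul_assoc, Matrix.diagonal_mul_diagonal]
  set M : Matrix (Fin p) (Fin n) ℝ := Vd * Matrix.diagonal m * Udᵀ with hMdef
  set A : Matrix (Fin p) (Fin q) ℝ := Vd * Matrix.diagonal a * Vdᵀ * β with hAdef
  have key1 : M * (X * β) = Vd * Matrix.diagonal (fun j => m j * s j) * Vdᵀ * β := by
    rw [hMdef, Matrix.mul_assoc (Vd * Matrix.diagonal m) Udᵀ (X * β),
      ← Matrix.mul_assoc Udᵀ X β, hUdX, hDd]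
    simp only [← Matrix.mul_assoc]
    rw [Matrix.mul_assoc Vd (Matrix.diagonal m) (Matrix.diagonal s),
      Matrix.diagonal_mul_diagonal]
  have hms : Matrix.diagonal (fun j => m j * s j) = Matrix.diagonal a + 1 := by
    rw [← Matrix.diagonal_one, Matrix.diagonal_add]
    refine congrArg Matrix.diagonal (funext fun j => ?_)
    have h1 := hs0 j
    have h2 := hgl0 j
    simp only [hmdef, hadef, Pi.add_apply]
    field_simp
    ring
  have hdec : ∀ ω, βE ω - Vd * Vdᵀ * β = A + M * E ω := by
    intro ω
    rw [hβE ω, hY ω, hM, ← hMdef, Matrix.mul_add, key1, hms,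
      Matrix.mul_add Vd (Matrix.diagonal a) 1, Matrix.mul_one, Matrix.add_mul, Matrix.add_mul]
    abel
  set C : Matrix (Fin n) (Fin n) ℝ := Mᵀ * Sx * M with hCdef
  set N1 : Matrix (Fin q) (Fin n) ℝ := Aᵀ * Sx * M with hN1
  set N2 : Matrix (Fin q) (Fin n) ℝ := (Mᵀ * Sx * A)ᵀ with hN2
  have hsplit : ∀ ω, ((βE ω - Vd * Vdᵀ * β)ᵀ * Sx * (βE ω - Vd * Vdᵀ * β)).trace
      = (Aᵀ * Sx * A).trace + ((N1 * E ω).trace +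
        ((N2 * E ω).trace + ((E ω)ᵀ * C * E ω).trace)) := by
    intro ω
    have t2' : ((E ω)ᵀ * (Mᵀ * Sx * A))ᵀ = N2 * E ω := by
      rw [transpose_mul, transpose_transpose, hN2]
    rw [hdec ω, transpose_add, Matrix.add_mul, Matrix.add_mul, Matrix.mul_add, Matrix.mul_add,
      trace_add, trace_add, trace_add, ← t2', trace_transpose, hN1, hCdef]
    simp only [Matrix.mul_assoc, Matrix.transpose_mul]
    ring
  obtain ⟨hi1, he1⟩ := int_lin P E hL2 hmean N1
  obtain ⟨hi2, he2⟩ := int_lin P E hL2 hmean N2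
  obtain ⟨hiq, heq'⟩ := int_quad P E Se hL2 hcov C
  have hrw : (fun ω => ((βE ω - Vd * Vdᵀ * β)ᵀ * Sx * (βE ω - Vd * Vdᵀ * β)).trace)
      = fun ω => (Aᵀ * Sx * A).trace + ((N1 * E ω).trace +
        ((N2 * E ω).trace + ((E ω)ᵀ * C * E ω).trace)) := funext hsplit
  have hg1 : Integrable (fun ω => (N2 * E ω).trace + ((E ω)ᵀ * C * E ω).trace) P := hi2.add hiq
  have hg2 : Integrable (fun ω => (N1 * E ω).trace +
      ((N2 * E ω).trace + ((E ω)ᵀ * C * E ω).trace)) P := hi1.add hg1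
  rw [hrw, integral_add (integrable_const _) hg2,
    integral_add hi1 hg1, integral_add hi2 hiq, he1, he2, heq', integral_const]
  simp only [Measure.real, measure_univ, ENNReal.toReal_one, smul_eq_mul, one_mul, zero_add]
  -- variance term
  have hMM : M * Mᵀ = Vd * Matrix.diagonal (fun j => m j * m j) * Vdᵀ := by
    rw [hMdef]
    simp only [Matrix.transpose_mul, Matrix.transpose_transpose, Matrix.diagonal_transpose,
      Matrix.mul_assoc]
    rw [← Matrix.mul_assoc Udᵀ Ud, hUdU, Matrix.one_mul,
      ← Matrix.mul_assoc (Matrix.diagonal m) (Matrix.diagonal m) Vdᵀ,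
      Matrix.diagonal_mul_diagonal]
  have hdiag2 : Vd * (Dd ^ 2)⁻¹ * Φd ^ 2 * ((Φd + lam • 1) ^ 2)⁻¹ * Vdᵀ
      = Vd * Matrix.diagonal (fun j => m j * m j) * Vdᵀ := by
    rw [hD2inv, hΦl2inv, hΦd, Matrix.diagonal_pow]
    simp only [Matrix.mul_assoc]
    rw [← Matrix.mul_assoc (Matrix.diagonal (g ^ 2)), Matrix.diagonal_mul_diagonal,
      ← Matrix.mul_assoc (Matrix.diagonal fun j => (s j ^ 2)⁻¹), Matrix.diagonal_mul_diagonal]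
    refine congrArg (fun Z : Matrix (Fin d) (Fin d) ℝ => Vd * (Z * Vdᵀ))
      (congrArg Matrix.diagonal (funext fun j => ?_))
    have h1 := hs0 j
    have h2 := hgl0 j
    simp only [hmdef, Pi.pow_apply]
    field_simp
  have hCt : C.trace = (Vd * (Dd ^ 2)⁻¹ * Φd ^ 2 * ((Φd + lam • 1) ^ 2)⁻¹ * Vdᵀ * Sx).trace := by
    rw [hCdef, Matrix.trace_mul_cycle, hMM, ← hdiag2]
  -- bias term
  have ha : Matrix.diagonal a = (-lam) • Matrix.diagonal (fun j => (g j + lam)⁻¹) := by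
    rw [← Matrix.diagonal_smul]
    refine congrArg Matrix.diagonal (funext fun j => ?_)
    simp only [hadef, Pi.smul_apply, smul_eq_mul]
    ring
  have hA2 : Aᵀ * Sx * A = (lam ^ 2) •
      (βᵀ * (Vd * (Φd + lam • 1)⁻¹ * Vdᵀ * Sx * Vd * (Φd + lam • 1)⁻¹ * Vdᵀ) * β) := by
    rw [hΦlinv, hAdef, ha]
    simp only [Matrix.transpose_mul, Matrix.transpose_smul, Matrix.transpose_transpose,
      Matrix.diagonal_transpose, Matrix.smul_mul, Matrix.mul_smul, smul_smul, Matrix.mul_assoc]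
    rw [show -lam * -lam = lam ^ 2 by ring]
  have hbias : (Aᵀ * Sx * A).trace = lam ^ 2 *
      (βᵀ * (Vd * (Φd + lam • 1)⁻¹ * Vdᵀ * Sx * Vd * (Φd + lam • 1)⁻¹ * Vdᵀ) * β).trace := by
    rw [hA2, Matrix.trace_smul, smul_eq_mul]
  rw [RE, vec_quad β (Vd * (Φd + lam • 1)⁻¹ * Vdᵀ * Sx * Vd * (Φd + lam • 1)⁻¹ * Vdᵀ),
    hbias, hCt]
  ring
end

section
/- Let γ > 0, T > 0, and c > 0, and define the limiting EgReg risk function r(λ) = c² λ² m'(−λ) + T γ (m(−λ) − λ m'(−λ)) for λ > 0. Then λ* = T γ / c² minimizes r over (0, ∞), i.e. r(λ) ≥ r(λ*) for all λ > 0, and the minimum value is r(λ*) = T γ m(−λ*). -/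
open Filter Topology

/-- The Stieltjes transform of the Marchenko–Pastur law with ratio `γ`,
defined for `z < 0` by `m(z) = (1 − γ − z − √((1 − γ − z)² − 4γz)) / (2γz)`. -/
noncomputable def mMP (γ z : ℝ) : ℝ :=
  (1 - γ - z - Real.sqrt ((1 - γ - z) ^ 2 - 4 * γ * z)) / (2 * γ * z)

/-- The limiting EgReg risk function
`r(λ) = c² λ² m'(−λ) + T γ (m(−λ) − λ m'(−λ))` for `λ > 0`. -/
noncomputable def limRisk (γ T c lam : ℝ) : ℝ :=
  c ^ 2 * lam ^ 2 * deriv (mMP γ) (-lam) +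
    T * γ * (mMP γ (-lam) - lam * deriv (mMP γ) (-lam))

lemma hasDerivAt_mMP (γ : ℝ) (hγ : 0 < γ) {z : ℝ} (hz : z < 0) :
    HasDerivAt (mMP γ)
      (((γ - 1) * Real.sqrt ((1 - γ - z) ^ 2 - 4 * γ * z) - (1 + γ) * z + (1 - γ) ^ 2) /
        (2 * γ * z ^ 2 * Real.sqrt ((1 - γ - z) ^ 2 - 4 * γ * z))) z := by
  have hD : 0 < (1 - γ - z) ^ 2 - 4 * γ * z := by nlinarith [sq_nonneg (1 - γ - z)]
  set s := Real.sqrt ((1 - γ - z) ^ 2 - 4 * γ * z) with hs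
  have hs0 : 0 < s := Real.sqrt_pos.2 hD
  have hs2 : s ^ 2 = (1 - γ - z) ^ 2 - 4 * γ * z := Real.sq_sqrt hD.le
  have hpoly : HasDerivAt (fun z : ℝ => (1 - γ - z) ^ 2 - 4 * γ * z) (2 * (z - 1 - γ)) z := by
    have h1 := (((hasDerivAt_id z).const_sub (1 - γ)).pow 2).sub ((hasDerivAt_id z).const_mul (4 * γ))
    refine h1.congr_deriv (Eq.symm ?_)
    simp
    ring
  have hsq : HasDerivAt (fun z : ℝ => Real.sqrt ((1 - γ - z) ^ 2 - 4 * γ * z))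
      ((z - 1 - γ) / s) z := by
    have := (Real.hasDerivAt_sqrt hD.ne').comp z hpoly
    refine this.congr_deriv (Eq.symm ?_)
    rw [← hs]
    field_simp
  have hnum : HasDerivAt (fun z : ℝ => 1 - γ - z - Real.sqrt ((1 - γ - z) ^ 2 - 4 * γ * z))
      (-1 - (z - 1 - γ) / s) z := by
    have := ((hasDerivAt_id z).const_sub (1 - γ)).sub hsq
    exact this
  have hden : HasDerivAt (fun z : ℝ => 2 * γ * z) (2 * γ) z := by
    simpa using (hasDerivAt_id z).const_mul (2 * γ)
  have hden0 : 2 * γ * z ≠ 0 := by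
    have : 2 * γ * z < 0 := by nlinarith
    exact this.ne
  have := hnum.div hden hden0
  refine this.congr_deriv (Eq.symm ?_)
  rw [← hs]
  have hz0 : z ≠ 0 := hz.ne
  rw [div_eq_div_iff (by positivity) (by positivity)]
  field_simp
  ring_nf
  linear_combination (-1) * hs2

lemma deriv_mMP (γ : ℝ) (hγ : 0 < γ) {z : ℝ} (hz : z < 0) :
    deriv (mMP γ) z =
      ((γ - 1) * Real.sqrt ((1 - γ - z) ^ 2 - 4 * γ * z) - (1 + γ) * z + (1 - γ) ^ 2) /
        (2 * γ * z ^ 2 * Real.sqrt ((1 - γ - z) ^ 2 - 4 * γ * z)) :=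
  (hasDerivAt_mMP γ hγ hz).deriv

lemma limRisk_closed (γ T c lamS lam : ℝ) (hγ : 0 < γ) (hc : 0 < c) (hlam : 0 < lam)
    (hTγ : T * γ = c ^ 2 * lamS) :
    limRisk γ T c lam = c ^ 2 * ((-lamS - 1 - γ) + 2 * γ) / (2 * γ) +
      c ^ 2 * ((-lam - 1 - γ) * (-lamS - 1 - γ) - 4 * γ) /
        (2 * γ * Real.sqrt ((1 - γ - (-lam)) ^ 2 - 4 * γ * (-lam))) := by
  have hz : -lam < 0 := neg_neg_iff_pos.mpr hlam
  have hD : 0 < (1 - γ - (-lam)) ^ 2 - 4 * γ * (-lam) := by nlinarith [sq_nonneg (1 - γ + lam)]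
  unfold limRisk
  rw [deriv_mMP γ hγ hz, hTγ]
  unfold mMP
  set s := Real.sqrt ((1 - γ - (-lam)) ^ 2 - 4 * γ * (-lam)) with hs
  have hs0 : 0 < s := Real.sqrt_pos.2 hD
  have hs2 : s ^ 2 = (1 - γ - (-lam)) ^ 2 - 4 * γ * (-lam) := Real.sq_sqrt hD.le
  field_simp
  ring_nf
  linear_combination lamS * hs2

lemma key_ineq (γ u v a b : ℝ) (hγ : 0 < γ) (hu : u < 0) (hv : v < 0) (ha : 0 ≤ a)
    (hb : 0 ≤ b) (ha2 : a ^ 2 = u ^ 2 - 4 * γ) (hb2 : b ^ 2 = v ^ 2 - 4 * γ) :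
    a * b ≤ u * v - 4 * γ := by
  have h1 : 4 * γ ≤ u * v := by
    nlinarith [mul_pos (neg_pos.2 hu) (neg_pos.2 hv), sq_nonneg (u - v), sq_nonneg (u + v),
      sq_nonneg (u * v - 4 * γ)]
  nlinarith [h1, mul_nonneg ha hb, sq_nonneg (u - v), sq_nonneg (a - b), sq_nonneg (a + b)]

theorem limRisk_minimized_at_optimal_lambda (γ T c : ℝ) (hγ : 0 < γ) (hT : 0 < T)
    (hc : 0 < c) :
    (∀ lam : ℝ, 0 < lam → limRisk γ T c (T * γ / c ^ 2) ≤ limRisk γ T c lam) ∧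
    limRisk γ T c (T * γ / c ^ 2) = T * γ * mMP γ (-(T * γ / c ^ 2)) := by
  have hlamS : 0 < T * γ / c ^ 2 := by positivity
  set lamS := T * γ / c ^ 2 with hlamSdef
  have hTγ : T * γ = c ^ 2 * lamS := by
    rw [hlamSdef]; field_simp
  constructor
  · intro lam hlam
    rw [limRisk_closed γ T c lamS lam hγ hc hlam hTγ,
        limRisk_closed γ T c lamS lamS hγ hc hlamS hTγ]
    have hDa : 0 < (1 - γ - (-lam)) ^ 2 - 4 * γ * (-lam) := by nlinarith [sq_nonneg (1 - γ + lam)]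
    have hDb : 0 < (1 - γ - (-lamS)) ^ 2 - 4 * γ * (-lamS) := by
      nlinarith [sq_nonneg (1 - γ + lamS)]
    set a := Real.sqrt ((1 - γ - (-lam)) ^ 2 - 4 * γ * (-lam)) with hadef
    set b := Real.sqrt ((1 - γ - (-lamS)) ^ 2 - 4 * γ * (-lamS)) with hbdef
    have ha0 : 0 < a := Real.sqrt_pos.2 hDa
    have hb0 : 0 < b := Real.sqrt_pos.2 hDb
    have ha2 : a ^ 2 = (-lam - 1 - γ) ^ 2 - 4 * γ := by
      rw [hadef, Real.sq_sqrt hDa.le]; ring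
    have hb2 : b ^ 2 = (-lamS - 1 - γ) ^ 2 - 4 * γ := by
      rw [hbdef, Real.sq_sqrt hDb.le]; ring
    have key : a * b ≤ (-lam - 1 - γ) * (-lamS - 1 - γ) - 4 * γ :=
      key_ineq γ (-lam - 1 - γ) (-lamS - 1 - γ) a b hγ (by linarith) (by linarith)
        ha0.le hb0.le (by rw [ha2]) (by rw [hb2])
    apply add_le_add_right
    have e : (-lamS - 1 - γ) * (-lamS - 1 - γ) - 4 * γ = b ^ 2 := by rw [hb2]; ring
    rw [e, div_le_div_iff₀ (by positivity) (by positivity)]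
    nlinarith [mul_nonneg (mul_nonneg (sub_nonneg.2 key) (by positivity : (0:ℝ) ≤ 2 * γ * c ^ 2)) hb0.le, ha0, hb0]
  · unfold limRisk
    linear_combination (-(lamS * deriv (mMP γ) (-lamS))) * hTγ
end
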